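/- Let F be a field of characteristic zero and m, m' coprime positive integers. There is an F-algebra isomorphism γ from the tensor product (F[x]/⟨Φ_m(x)⟩) ⊗_F (F[x']/⟨Φ_{m'}(x')⟩) to F[z]/⟨Φ_{mm'}(z)⟩ which sends the product of the two root classes, (x mod Φ_m) ⊗ (x' mod Φ_{m'}), to the root class z mod Φ_{mm'}. -/

import Mathlib

open TensorProduct Polynomial

private lemma key_dvd (F : Type*) [Field F] [CharZero F] (m n c : ℕ)
    (hm : 0 < m) (hn : 0 < n) (hc : Nat.Coprime c m) :
    cyclotomic (m * n) F ∣ expand F (n * c) (cyclotomic m F) := by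
  have hQ : cyclotomic (m * n) ℚ ∣ expand ℚ (n * c) (cyclotomic m ℚ) := by
    have hmn : 0 < m * n := Nat.mul_pos hm hn
    obtain ⟨ζ, hζ⟩ : ∃ ζ : ℂ, IsPrimitiveRoot ζ (m * n) :=
      ⟨_, Complex.isPrimitiveRoot_exp (m * n) hmn.ne'⟩
    rw [cyclotomic_eq_minpoly_rat hζ hmn]
    apply minpoly.dvd
    rw [expand_aeval, pow_mul]
    have h1 : IsPrimitiveRoot (ζ ^ n) m := hζ.pow hmn (mul_comm m n)
    have h2 := h1.pow_of_coprime c hc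
    rw [aeval_def, eval₂_eq_eval_map, map_cyclotomic]
    exact h2.isRoot_cyclotomic hm
  have := Polynomial.map_dvd (algebraMap ℚ F) hQ
  rwa [map_cyclotomic, Polynomial.map_expand, map_cyclotomic] at this

/-- for coprime m, m', there is an F-algebra isomorphism
(F[x]/⟨Φ_m⟩) ⊗_F (F[x']/⟨Φ_{m'}⟩) ≃ F[z]/⟨Φ_{mm'}⟩ sending the product
of the two root classes to the root class of Φ_{mm'}. -/
theorem cyclotomic_tensor_equiv_coprime
    (F : Type*) [Field F] [CharZero F] (m m' : ℕ)
    (hm : 0 < m) (hm' : 0 < m') (hcop : Nat.Coprime m m') :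
    ∃ γ : (AdjoinRoot (cyclotomic m F)) ⊗[F] (AdjoinRoot (cyclotomic m' F))
        ≃ₐ[F] AdjoinRoot (cyclotomic (m * m') F),
      γ (AdjoinRoot.root (cyclotomic m F) ⊗ₜ[F]
          AdjoinRoot.root (cyclotomic m' F)) =
        AdjoinRoot.root (cyclotomic (m * m') F) := by
  set s := m' ^ m.totient with hs_def
  set t := m ^ m'.totient with ht_def
  have hφm : 0 < m.totient := Nat.totient_pos.2 hm
  have hφm' : 0 < m'.totient := Nat.totient_pos.2 hm'
  have hs_fac : s = m' * m' ^ (m.totient - 1) := by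
    rw [hs_def, ← pow_succ', Nat.sub_add_cancel hφm]
  have ht_fac : t = m * m ^ (m'.totient - 1) := by
    rw [ht_def, ← pow_succ', Nat.sub_add_cancel hφm']
  -- divisibility facts
  have d1 : cyclotomic (m * m') F ∣ expand F s (cyclotomic m F) := by
    rw [hs_fac]
    exact key_dvd F m m' _ hm hm' (hcop.symm.pow_left _)
  have d2 : cyclotomic (m * m') F ∣ expand F t (cyclotomic m' F) := by
    rw [ht_fac, mul_comm m m']
    exact key_dvd F m' m _ hm' hm (hcop.pow_left _)
  set R := AdjoinRoot (cyclotomic (m * m') F) with hR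
  set z : R := AdjoinRoot.root (cyclotomic (m * m') F) with hz
  have hz_m : aeval (z ^ s) (cyclotomic m F) = 0 := by
    rw [← expand_aeval, AdjoinRoot.aeval_eq, AdjoinRoot.mk_eq_zero]
    exact d1
  have hz_m' : aeval (z ^ t) (cyclotomic m' F) = 0 := by
    rw [← expand_aeval, AdjoinRoot.aeval_eq, AdjoinRoot.mk_eq_zero]
    exact d2
  set f : AdjoinRoot (cyclotomic m F) →ₐ[F] R :=
    AdjoinRoot.liftAlgHom (cyclotomic m F) (Algebra.ofId F R) (z ^ s)
      (by rw [Algebra.toRingHom_ofId, ← aeval_def]; exact hz_m) with hf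
  set g : AdjoinRoot (cyclotomic m' F) →ₐ[F] R :=
    AdjoinRoot.liftAlgHom (cyclotomic m' F) (Algebra.ofId F R) (z ^ t)
      (by rw [Algebra.toRingHom_ofId, ← aeval_def]; exact hz_m') with hg
  set γ₀ := Algebra.TensorProduct.productMap f g with hγ₀
  -- z^(m*m') = 1
  have hz1 : z ^ (m * m') = 1 := by
    have h0 : AdjoinRoot.mk (cyclotomic (m * m') F) (X ^ (m * m') - 1) = 0 :=
      AdjoinRoot.mk_eq_zero.2 (cyclotomic.dvd_X_pow_sub_one (m * m') F)
    rw [map_sub, map_pow, AdjoinRoot.mk_X, map_one, sub_eq_zero] at h0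
    exact h0
  -- s + t ≡ 1 mod m*m'
  have hst : s + t ≡ 1 [MOD m * m'] := by
    rw [← Nat.modEq_and_modEq_iff_modEq_mul hcop]
    constructor
    · calc s + t ≡ 1 + 0 [MOD m] := by
            refine Nat.ModEq.add (Nat.ModEq.pow_totient hcop.symm) ?_
            rw [ht_fac]
            exact Nat.modEq_zero_iff_dvd.2 ⟨_, rfl⟩
        _ = 1 := by ring
    · calc s + t ≡ 0 + 1 [MOD m'] := by
            refine Nat.ModEq.add ?_ (Nat.ModEq.pow_totient hcop)
            rw [hs_fac]
            exact Nat.modEq_zero_iff_dvd.2 ⟨_, rfl⟩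
        _ = 1 := by ring
  have h0s : 0 < s := hs_def ▸ pow_pos hm' _
  have hone_le : 1 ≤ s + t := by omega
  obtain ⟨k, hk⟩ := (Nat.modEq_iff_dvd' hone_le).1 hst.symm
  have hst_eq : s + t = 1 + (m * m') * k := by omega
  have hzst : z ^ (s + t) = z := by
    rw [hst_eq, pow_add, pow_one, pow_mul, hz1, one_pow, mul_one]
  -- the key image computation
  have hγz : γ₀ (AdjoinRoot.root (cyclotomic m F) ⊗ₜ[F]
      AdjoinRoot.root (cyclotomic m' F)) = z := by
    rw [hγ₀, Algebra.TensorProduct.productMap_apply_tmul, hf, hg,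
      AdjoinRoot.liftAlgHom_root, AdjoinRoot.liftAlgHom_root, ← pow_add, hzst]
  -- finite dimensionality and ranks
  have hcm : cyclotomic m F ≠ 0 := cyclotomic_ne_zero m F
  have hcm' : cyclotomic m' F ≠ 0 := cyclotomic_ne_zero m' F
  have hcmm' : cyclotomic (m * m') F ≠ 0 := cyclotomic_ne_zero (m * m') F
  haveI : Module.Finite F (AdjoinRoot (cyclotomic m F)) := (AdjoinRoot.powerBasis hcm).finite
  haveI : Module.Finite F (AdjoinRoot (cyclotomic m' F)) := (AdjoinRoot.powerBasis hcm').finite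
  haveI : Module.Finite F R := (AdjoinRoot.powerBasis hcmm').finite
  have hr1 : Module.finrank F (AdjoinRoot (cyclotomic m F)) = m.totient := by
    rw [(AdjoinRoot.powerBasis hcm).finrank, AdjoinRoot.powerBasis_dim, natDegree_cyclotomic]
  have hr2 : Module.finrank F (AdjoinRoot (cyclotomic m' F)) = m'.totient := by
    rw [(AdjoinRoot.powerBasis hcm').finrank, AdjoinRoot.powerBasis_dim, natDegree_cyclotomic]
  have hr3 : Module.finrank F R = (m * m').totient := by
    rw [(AdjoinRoot.powerBasis hcmm').finrank, AdjoinRoot.powerBasis_dim, natDegree_cyclotomic]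
  have hrank : Module.finrank F
      ((AdjoinRoot (cyclotomic m F)) ⊗[F] (AdjoinRoot (cyclotomic m' F))) =
      Module.finrank F R := by
    rw [Module.finrank_tensorProduct, hr1, hr2, hr3, Nat.totient_mul hcop]
  -- surjectivity
  have hsurj : Function.Surjective γ₀ := by
    rw [← AlgHom.range_eq_top, eq_top_iff, ← AdjoinRoot.adjoinRoot_eq_top,
      Algebra.adjoin_le_iff, Set.singleton_subset_iff]
    exact ⟨_, hγz⟩
  have hinj : Function.Injective γ₀ :=
    (LinearMap.injective_iff_surjective_of_finrank_eq_finrank hrank).2 hsurj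
  exact ⟨AlgEquiv.ofBijective γ₀ ⟨hinj, hsurj⟩, hγz⟩
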